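/- Let f : ℝ^n → ℝ be convex, symmetric (invariant under permutations of coordinates), and differentiable. For any C ∈ ℝ and x ∈ ℝ^n, define x ∨ C ∈ ℝ^n by (x ∨ C)_i = max(x_i, C). Then for every index i achieving the minimum entry of x (i.e., x_i = min_j x_j), we have ∂f/∂x_i(x) ≤ ∂f/∂x_i(x ∨ C). -/

import Mathlib

open Function

/-- Monotonicity of the gradient of a convex differentiable function. -/
lemma grad_mono {n : ℕ} (f : (Fin n → ℝ) → ℝ) (hconv : ConvexOn ℝ Set.univ f)
    (hdiff : Differentiable ℝ f) (a b : Fin n → ℝ) :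
    fderiv ℝ f a (b - a) ≤ fderiv ℝ f b (b - a) := by
  set g : ℝ → ℝ := fun t => f (t • (b - a) + a) with hgdef
  have hg : ∀ t : ℝ, HasDerivAt g (fderiv ℝ f (t • (b - a) + a) (b - a)) t := by
    intro t
    have h1 : HasDerivAt (fun t : ℝ => t • (b - a) + a) (b - a) t := by
      simpa using ((hasDerivAt_id t).smul_const (b - a)).add_const a
    exact (hdiff _).hasFDerivAt.comp_hasDerivAt t h1
  have hgc : ConvexOn ℝ Set.univ g := by
    have := hconv.comp_affineMap (AffineMap.lineMap a b : ℝ →ᵃ[ℝ] (Fin n → ℝ))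
    have h2 : (f ∘ ⇑(AffineMap.lineMap a b : ℝ →ᵃ[ℝ] (Fin n → ℝ))) = g := by
      funext t; simp [hgdef, AffineMap.lineMap_apply_module']
    rw [← h2]; simpa using this
  have h0 : (0:ℝ) ∈ (Set.univ : Set ℝ) := trivial
  have key1 : deriv g 0 ≤ slope g 0 1 :=
    hgc.deriv_le_slope h0 trivial one_pos (hg 0).differentiableAt
  have key2 : slope g 0 1 ≤ deriv g 1 :=
    hgc.slope_le_deriv h0 trivial one_pos (hg 1).differentiableAt
  have e0 : deriv g 0 = fderiv ℝ f a (b - a) := by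
    rw [(hg 0).deriv]; norm_num
  have e1 : deriv g 1 = fderiv ℝ f b (b - a) := by
    rw [(hg 1).deriv]; norm_num
  rw [e0] at key1; rw [e1] at key2; linarith

noncomputable def permCLM (n : ℕ) (σ : Equiv.Perm (Fin n)) : (Fin n → ℝ) →L[ℝ] (Fin n → ℝ) :=
  ContinuousLinearMap.pi (fun j => ContinuousLinearMap.proj (σ j))

lemma permCLM_apply {n : ℕ} (σ : Equiv.Perm (Fin n)) (x : Fin n → ℝ) :
    permCLM n σ x = x ∘ σ := rfl

lemma fderiv_perm {n : ℕ} (f : (Fin n → ℝ) → ℝ) (hdiff : Differentiable ℝ f)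
    (hsym : ∀ (σ : Equiv.Perm (Fin n)) (x : Fin n → ℝ), f (x ∘ σ) = f x)
    (σ : Equiv.Perm (Fin n)) (x v : Fin n → ℝ) :
    fderiv ℝ f x v = fderiv ℝ f (x ∘ σ) (v ∘ σ) := by
  have h1 : f ∘ (permCLM n σ) = f := funext fun y => hsym σ y
  have h2 : fderiv ℝ (f ∘ permCLM n σ) x = (fderiv ℝ f (x ∘ σ)).comp (permCLM n σ) := by
    rw [fderiv_comp x (hdiff _) (permCLM n σ).differentiableAt, (permCLM n σ).fderiv, permCLM_apply]
  rw [h1] at h2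
  rw [h2]; rfl

lemma single_comp_swap {n : ℕ} (i j : Fin n) :
    (Pi.single i (1:ℝ)) ∘ (Equiv.swap i j) = Pi.single j 1 := by
  funext k
  rcases eq_or_ne k j with rfl | hkj
  · simp [Equiv.swap_apply_right, Pi.single_apply]
  rcases eq_or_ne k i with rfl | hki
  · simp [Equiv.swap_apply_left, Pi.single_apply, hkj.symm, hkj]
  · simp [Equiv.swap_apply_of_ne_of_ne hki hkj, Pi.single_apply, hki, hkj]

lemma comp_swap_eq {n : ℕ} (x : Fin n → ℝ) (i j : Fin n) (h : x i = x j) :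
    x ∘ (Equiv.swap i j) = x := by
  funext k
  rcases eq_or_ne k i with rfl | hki
  · simpa [Equiv.swap_apply_left] using h.symm
  rcases eq_or_ne k j with rfl | hkj
  · simpa [Equiv.swap_apply_right] using h
  · simp [Equiv.swap_apply_of_ne_of_ne hki hkj]

/-- Equal coordinates give equal partial derivatives. -/
lemma partial_eq {n : ℕ} (f : (Fin n → ℝ) → ℝ) (hdiff : Differentiable ℝ f)
    (hsym : ∀ (σ : Equiv.Perm (Fin n)) (x : Fin n → ℝ), f (x ∘ σ) = f x)
    (x : Fin n → ℝ) (i j : Fin n) (h : x i = x j) :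
    fderiv ℝ f x (Pi.single i 1) = fderiv ℝ f x (Pi.single j 1) := by
  have := fderiv_perm f hdiff hsym (Equiv.swap i j) x (Pi.single i 1)
  rwa [comp_swap_eq x i j h, single_comp_swap] at this

/-- Sorted coordinates give sorted partial derivatives. -/
lemma partial_le {n : ℕ} (f : (Fin n → ℝ) → ℝ) (hconv : ConvexOn ℝ Set.univ f)
    (hdiff : Differentiable ℝ f)
    (hsym : ∀ (σ : Equiv.Perm (Fin n)) (x : Fin n → ℝ), f (x ∘ σ) = f x)
    (x : Fin n → ℝ) (i j : Fin n) (h : x i ≤ x j) :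
    fderiv ℝ f x (Pi.single i 1) ≤ fderiv ℝ f x (Pi.single j 1) := by
  rcases eq_or_lt_of_le h with heq | hlt
  · exact (partial_eq f hdiff hsym x i j heq).le
  set σ := Equiv.swap i j with hσ
  set x' := x ∘ σ with hx'
  have hij : i ≠ j := fun hij => absurd (hij ▸ rfl) hlt.ne
  have hd : (x : Fin n → ℝ) - x' = (x i - x j) • (Pi.single i 1 - Pi.single j 1) := by
    funext k
    rcases eq_or_ne k i with rfl | hki
    · simp [hx', hσ, Equiv.swap_apply_left, Pi.single_apply, hij]
    rcases eq_or_ne k j with rfl | hkj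
    · simp only [hx', hσ, Function.comp_apply, Equiv.swap_apply_right, Pi.sub_apply,
        Pi.smul_apply, Pi.single_apply, if_neg hij.symm, if_pos rfl, smul_eq_mul, if_true]
      ring
    · simp [hx', hσ, Equiv.swap_apply_of_ne_of_ne hki hkj, Pi.single_apply, hki, hkj]
  have hmono := grad_mono f hconv hdiff x' x
  -- rewrite x - x' at the left point using symmetry
  have hperm : fderiv ℝ f x' (x - x') = fderiv ℝ f x (-(x - x')) := by
    have h1 := fderiv_perm f hdiff hsym σ x' (x - x')
    have h2 : x' ∘ σ = x := by
      funext k; simp [hx', hσ, Function.comp]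
    have h3 : (x - x') ∘ σ = -(x - x') := by
      funext k
      rcases eq_or_ne k i with rfl | hki
      · simp [hx', hσ, Equiv.swap_apply_left, Function.comp, Equiv.swap_apply_right]
      rcases eq_or_ne k j with rfl | hkj
      · simp [hx', hσ, Equiv.swap_apply_right, Function.comp, Equiv.swap_apply_left]
      · simp [hx', hσ, Equiv.swap_apply_of_ne_of_ne hki hkj, Function.comp]
    rw [h1, h2, h3]
  rw [hperm, map_neg] at hmono
  have hnn : 0 ≤ fderiv ℝ f x (x - x') := by linarith
  rw [hd, map_smul, map_sub, smul_eq_mul] at hnn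
  nlinarith [hnn, hlt]

/-- The gradient-boosting monotonicity property of symmetric convex differentiable
functions: if `i` attains the minimum entry of `x`, then
`∂f/∂x_i(x) ≤ ∂f/∂x_i(x ∨ C)` where `(x ∨ C)_j = max(x_j, C)`. -/
theorem stmt14 (n : ℕ) (f : (Fin n → ℝ) → ℝ)
    (hconv : ConvexOn ℝ Set.univ f) (hdiff : Differentiable ℝ f)
    (hsym : ∀ (σ : Equiv.Perm (Fin n)) (x : Fin n → ℝ), f (x ∘ σ) = f x)
    (C : ℝ) (x : Fin n → ℝ) (i : Fin n) (hi : ∀ j, x i ≤ x j) :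
    fderiv ℝ f x (Pi.single i 1)
      ≤ fderiv ℝ f (fun j => max (x j) C) (Pi.single i 1) := by
  set y : Fin n → ℝ := fun j => max (x j) C with hy
  rcases le_or_gt C (x i) with hC | hC
  · have hyx : y = x := funext fun j => max_eq_left (hC.trans (hi j))
    rw [hyx]
  · set L1 := fderiv ℝ f x with hL1
    set L2 := fderiv ℝ f y with hL2
    have hyi : y i = C := max_eq_right hC.le
    set d : Fin n → ℝ := fun j => y j - x j with hd
    have hdnn : ∀ j, 0 ≤ d j := fun j => sub_nonneg.2 (le_max_left _ _)
    have hexp : ∀ L : (Fin n → ℝ) →L[ℝ] ℝ,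
        L (y - x) = ∑ j, d j * L (Pi.single j 1) := by
      intro L
      have h1 : (y - x : Fin n → ℝ) = ∑ j, d j • (Pi.single j 1 : Fin n → ℝ) := by
        funext k
        simp [Finset.sum_apply, Pi.single_apply, mul_ite, hd]
      rw [h1, map_sum]
      simp [smul_eq_mul]
    have hmono := grad_mono f hconv hdiff x y
    have key : (∑ j, d j) * L1 (Pi.single i 1) ≤ (∑ j, d j) * L2 (Pi.single i 1) := by
      rw [Finset.sum_mul, Finset.sum_mul]
      calc ∑ j, d j * L1 (Pi.single i 1)
          ≤ ∑ j, d j * L1 (Pi.single j 1) :=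
            Finset.sum_le_sum fun j _ =>
              mul_le_mul_of_nonneg_left (partial_le f hconv hdiff hsym x i j (hi j)) (hdnn j)
        _ = L1 (y - x) := (hexp L1).symm
        _ ≤ L2 (y - x) := hmono
        _ = ∑ j, d j * L2 (Pi.single j 1) := hexp L2
        _ = ∑ j, d j * L2 (Pi.single i 1) := Finset.sum_congr rfl fun j _ => by
            rcases le_or_gt C (x j) with h | h
            · have hz : d j = 0 := by simp [hd, hy, max_eq_left h]
              rw [hz, zero_mul, zero_mul]
            · have hyj : y j = C := max_eq_right h.le
              rw [partial_eq f hdiff hsym y j i (by rw [hyj, hyi])]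
    have hdi : 0 < d i := by simp [hd, hyi]; linarith
    have hS : 0 < ∑ j, d j :=
      lt_of_lt_of_le hdi (Finset.single_le_sum (fun j _ => hdnn j) (Finset.mem_univ i))
    exact (mul_le_mul_iff_right₀ hS).mp key
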